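/- For the OneMax problem under a dynamic uniform constraint with cardinality bound changing from B to B*, the MOEA-S algorithm, which uses single-bit flips and a dominance relation keeping at most two solutions in the population, starting from a solution that is optimal for bound B, has expected re-optimization time O(n log((n−B)/(n−B*))) if B < B*, and O(n log(B/B*)) if B > B*. -/

import Mathlib

open scoped ENNReal
open Classical

noncomputable section

/-- Probability that the Markov chain with transition kernel `K`, started at `x`,
has not visited the target set `A` during the time steps `0, 1, …, t`. -/
def survive {S : Type*} (K : S → S → ℝ≥0∞) (A : S → Prop) : ℕ → S → ℝ≥0∞
  | 0, x => if A x then 0 else 1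
  | t + 1, x => if A x then 0 else ∑' y, K x y * survive K A t y

/-- Expected hitting time of the set `A` for the Markov chain with kernel `K` started at `x`,
computed as `∑_{t ≥ 0} Pr(T > t)`. -/
def hitTime {S : Type*} (K : S → S → ℝ≥0∞) (A : S → Prop) (x : S) : ℝ≥0∞ :=
  ∑' t, survive K A t x

/-- One step of a (1+1)-type algorithm: an offspring `z` is sampled from the mutation
distribution `pm x ·`; it replaces `x` iff `accept x z` holds. -/
def eaKernel {S : Type*} (pm : S → S → ℝ≥0∞) (accept : S → S → Prop) (x y : S) : ℝ≥0∞ :=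
  ∑' z, if (if accept x z then z else x) = y then pm x z else 0

/-- The number of one-bits of a bit string. -/
def ones {n : ℕ} (x : Fin n → Bool) : ℕ := (Finset.univ.filter fun i => x i = true).card

/-- Standard bit mutation: each of the `n` bits is flipped independently with probability `1/n`. -/
def pmutEA (n : ℕ) (x y : Fin n → Bool) : ℝ≥0∞ :=
  ((n : ℝ≥0∞)⁻¹) ^ hammingDist x y * (1 - (n : ℝ≥0∞)⁻¹) ^ (n - hammingDist x y)

/-- RLS mutation: exactly one bit, chosen uniformly at random, is flipped. -/
def pmutRLS (n : ℕ) (x y : Fin n → Bool) : ℝ≥0∞ :=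
  if hammingDist x y = 1 then (n : ℝ≥0∞)⁻¹ else 0


/-- `w` lies in the special bracket `{B*, s}` (where `s = B*−1` if the bound increases and
`s = B*+1` if it decreases). -/
def inBracket (Bs s w : ℕ) : Prop := w = Bs ∨ w = s

/-- The MOEA-S dominance relation (for `incr = true`, i.e. `B ≤ B*`; for `incr = false` the
comparison of the numbers of ones is reversed). -/
def domS {n : ℕ} (f : (Fin n → Bool) → ℝ) (Bs s : ℕ) (incr : Bool)
    (y z : Fin n → Bool) : Prop :=
  (¬(inBracket Bs s (ones y) ∧ inBracket Bs s (ones z)) ∧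
      ((if incr then ones z < ones y else ones y < ones z) ∨
        (ones y = ones z ∧ f z ≤ f y))) ∨
    (inBracket Bs s (ones y) ∧ inBracket Bs s (ones z) ∧ ones y = ones z ∧ f z ≤ f y)

/-- `y` and `z` are incomparable iff one of them has `B*` ones and the other `s` ones. -/
def incompS {n : ℕ} (Bs s : ℕ) (y z : Fin n → Bool) : Prop :=
  (ones y = Bs ∧ ones z = s) ∨ (ones y = s ∧ ones z = Bs)

/-- The MOEA-S population update: if the offspring `y` is incomparable with every member of `P`
it is added to the population; otherwise, if its number of ones lies between the bounds and it
dominates some member, it replaces the dominated member(s). -/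
def moeasUpdate {n : ℕ} (f : (Fin n → Bool) → ℝ) (Bs s : ℕ) (incr : Bool) (lo hi : ℕ)
    (P : Finset (Fin n → Bool)) (y : Fin n → Bool) : Finset (Fin n → Bool) :=
  if ∀ z ∈ P, incompS Bs s y z then insert y P
  else if (lo ≤ ones y ∧ ones y ≤ hi) ∧ ∃ z ∈ P, domS f Bs s incr y z then
    insert y (P.filter fun z => ¬domS f Bs s incr y z)
  else P

/-- One iteration of MOEA-S: a parent is chosen uniformly at random from the population, an
offspring is created by flipping a single uniformly random bit, and the population is updated. -/
def moeasKernel (n : ℕ) (f : (Fin n → Bool) → ℝ) (Bs s : ℕ) (incr : Bool) (lo hi : ℕ)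
    (P Q : Finset (Fin n → Bool)) : ℝ≥0∞ :=
  (P.card : ℝ≥0∞)⁻¹ *
    ∑ x ∈ P, ∑' y, if moeasUpdate f Bs s incr lo hi P y = Q then pmutRLS n x y else 0

private lemma survive_of_mem {S : Type*} (K : S → S → ℝ≥0∞) (A : S → Prop) {x : S}
    (hx : A x) : ∀ t, survive K A t x = 0
  | 0 => by simp [survive, hx]
  | t + 1 => by simp [survive, hx]

private lemma hitTime_le_of {S : Type*} (K : S → S → ℝ≥0∞) (A : S → Prop) (h : S → ℝ≥0∞)
    (hh : ∀ x, ¬ A x → 1 + ∑' y, K x y * h y ≤ h x) (x : S) :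
    hitTime K A x ≤ h x := by
  have key : ∀ t (x : S), ∑ s ∈ Finset.range (t + 1), survive K A s x ≤ h x := by
    intro t
    induction t with
    | zero =>
      intro x
      by_cases hx : A x
      · simp [survive, hx]
      · have h1 : (1 : ℝ≥0∞) ≤ h x :=
          le_trans (le_add_right le_rfl) (hh x hx)
        simpa [survive, hx] using h1
    | succ t ih =>
      intro x
      by_cases hx : A x
      · simp [survive_of_mem K A hx]
      · rw [Finset.sum_range_succ']
        have h0 : survive K A 0 x = 1 := by simp [survive, hx]
        have hs : ∀ s, survive K A (s + 1) x = ∑' y, K x y * survive K A s y := by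
          intro s; simp only [survive, if_neg hx]
        calc ∑ i ∈ Finset.range (t + 1), survive K A (i + 1) x + survive K A 0 x
            = 1 + ∑ i ∈ Finset.range (t + 1), ∑' y, K x y * survive K A i y := by
              rw [h0]; simp_rw [hs]; ring
          _ = 1 + ∑' y, ∑ i ∈ Finset.range (t + 1), K x y * survive K A i y := by
              rw [Summable.tsum_finsetSum fun i _ => ENNReal.summable]
          _ = 1 + ∑' y, K x y * ∑ i ∈ Finset.range (t + 1), survive K A i y := by
              simp_rw [Finset.mul_sum]
          _ ≤ 1 + ∑' y, K x y * h y := by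
              gcongr with y
              exact ih y
          _ ≤ h x := hh x hx
  rw [hitTime, ENNReal.tsum_eq_iSup_sum]
  refine iSup_le fun s => ?_
  have hsub : s ⊆ Finset.range (s.sup id + 1) := fun i hi =>
    Finset.mem_range.mpr (Nat.lt_succ_of_le (Finset.le_sup (f := id) hi))
  exact le_trans (Finset.sum_le_sum_of_subset hsub) (key _ x)

private def flip1 {n : ℕ} (x : Fin n → Bool) (i : Fin n) : Fin n → Bool :=
  Function.update x i (!x i)

private lemma flip1_self {n : ℕ} (x : Fin n → Bool) (i : Fin n) : flip1 x i i = !x i :=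
  Function.update_self _ _ _

private lemma flip1_ne {n : ℕ} (x : Fin n → Bool) {i j : Fin n} (h : j ≠ i) :
    flip1 x i j = x j :=
  Function.update_of_ne h _ _

private lemma hammingDist_flip1 {n : ℕ} (x : Fin n → Bool) (i : Fin n) :
    hammingDist x (flip1 x i) = 1 := by
  have : (Finset.univ.filter fun j => x j ≠ flip1 x i j) = {i} := by
    ext j
    simp only [Finset.mem_filter, Finset.mem_univ, true_and, Finset.mem_singleton]
    constructor
    · intro hj
      by_contra hji
      exact hj (flip1_ne x hji).symm
    · rintro rfl
      rw [flip1_self]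
      cases hxj : x j <;> simp [hxj]
  simp [hammingDist, this]

private lemma eq_flip1_of_hammingDist_eq_one {n : ℕ} {x y : Fin n → Bool}
    (h : hammingDist x y = 1) : ∃ i, y = flip1 x i := by
  rw [hammingDist] at h
  obtain ⟨i, hi⟩ := Finset.card_eq_one.mp h
  refine ⟨i, funext fun j => ?_⟩
  by_cases hji : j = i
  · subst hji
    have : x j ≠ y j := by
      have : j ∈ Finset.univ.filter fun k => x k ≠ y k := by rw [hi]; exact Finset.mem_singleton_self j
      simpa using this
    rw [flip1_self]
    cases hxj : x j <;> cases hyj : y j <;> simp_all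
  · have : j ∉ Finset.univ.filter fun k => x k ≠ y k := by
      rw [hi]; simpa using hji
    simp only [Finset.mem_filter, Finset.mem_univ, true_and, not_not] at this
    rw [flip1_ne x hji, this]

private lemma flip1_injective {n : ℕ} (x : Fin n → Bool) : Function.Injective (flip1 x) := by
  intro i j hij
  by_contra hne
  have h1 : flip1 x i i = !x i := flip1_self x i
  have h2 : flip1 x j i = x i := flip1_ne x hne
  rw [hij, h2] at h1
  cases x i <;> simp_all

private lemma ones_le {n : ℕ} (x : Fin n → Bool) : ones x ≤ n := by
  simpa [ones] using Finset.card_filter_le Finset.univ fun i => x i = true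

private lemma ones_flip1_true {n : ℕ} (x : Fin n → Bool) (i : Fin n) (h : x i = true) :
    ones x = ones (flip1 x i) + 1 := by
  have hset : (Finset.univ.filter fun j => flip1 x i j = true)
      = (Finset.univ.filter fun j => x j = true).erase i := by
    ext j
    simp only [Finset.mem_filter, Finset.mem_univ, true_and, Finset.mem_erase]
    by_cases hji : j = i
    · subst hji; simp [flip1_self, h]
    · simp [flip1_ne x hji, hji]
  have hmem : i ∈ Finset.univ.filter fun j => x j = true := by simp [h]
  rw [ones, ones, hset, Finset.card_erase_add_one hmem]

private lemma ones_flip1_false {n : ℕ} (x : Fin n → Bool) (i : Fin n) (h : x i = false) :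
    ones (flip1 x i) = ones x + 1 := by
  have hset : (Finset.univ.filter fun j => flip1 x i j = true)
      = insert i (Finset.univ.filter fun j => x j = true) := by
    ext j
    simp only [Finset.mem_filter, Finset.mem_univ, true_and, Finset.mem_insert]
    by_cases hji : j = i
    · subst hji; simp [flip1_self, h]
    · simp [flip1_ne x hji, hji]
  have hmem : i ∉ Finset.univ.filter fun j => x j = true := by simp [h]
  rw [ones, ones, hset, Finset.card_insert_of_notMem hmem]

private lemma card_true_eq_ones {n : ℕ} (x : Fin n → Bool) :
    (Finset.univ.filter fun i => x i = true).card = ones x := rfl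

private lemma card_false_add_ones {n : ℕ} (x : Fin n → Bool) :
    (Finset.univ.filter fun i => ¬(x i = true)).card + ones x = n := by
  rw [ones, add_comm]
  simpa using Finset.card_filter_add_card_filter_not (s := Finset.univ)
    (p := fun i => x i = true)

-- kernel computation for singleton population
private lemma kernel_sum {n : ℕ} (f : (Fin n → Bool) → ℝ) (Bs s : ℕ) (incr : Bool)
    (lo hi : ℕ) (x : Fin n → Bool) (h : Finset (Fin n → Bool) → ℝ≥0∞) :
    ∑' Q, moeasKernel n f Bs s incr lo hi {x} Q * h Q
      = (n : ℝ≥0∞)⁻¹ *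
        ∑ i : Fin n, h (moeasUpdate f Bs s incr lo hi {x} (flip1 x i)) := by
  have hker : ∀ Q, moeasKernel n f Bs s incr lo hi {x} Q
      = ∑ y : Fin n → Bool,
          if moeasUpdate f Bs s incr lo hi {x} y = Q then pmutRLS n x y else 0 := by
    intro Q
    rw [moeasKernel, Finset.sum_singleton, Finset.card_singleton, Nat.cast_one, inv_one,
      one_mul, tsum_fintype]
  calc ∑' Q, moeasKernel n f Bs s incr lo hi {x} Q * h Q
      = ∑ Q : Finset (Fin n → Bool), ∑ y : Fin n → Bool,
          (if moeasUpdate f Bs s incr lo hi {x} y = Q then pmutRLS n x y * h Q else 0) := by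
        rw [tsum_fintype]
        refine Finset.sum_congr rfl fun Q _ => ?_
        rw [hker Q, Finset.sum_mul]
        refine Finset.sum_congr rfl fun y _ => ?_
        rw [ite_mul, zero_mul]
    _ = ∑ y : Fin n → Bool, pmutRLS n x y * h (moeasUpdate f Bs s incr lo hi {x} y) := by
        rw [Finset.sum_comm]
        refine Finset.sum_congr rfl fun y _ => ?_
        rw [Finset.sum_ite_eq Finset.univ (moeasUpdate f Bs s incr lo hi {x} y)
          (fun Q => pmutRLS n x y * h Q)]
        simp
    _ = ∑ y ∈ Finset.univ.filter (fun y => hammingDist x y = 1),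
          (n : ℝ≥0∞)⁻¹ * h (moeasUpdate f Bs s incr lo hi {x} y) := by
        rw [Finset.sum_filter]
        refine Finset.sum_congr rfl fun y _ => ?_
        rw [pmutRLS]
        by_cases hd : hammingDist x y = 1 <;> simp [hd]
    _ = ∑ i : Fin n, (n : ℝ≥0∞)⁻¹ * h (moeasUpdate f Bs s incr lo hi {x} (flip1 x i)) := by
        have himg : Finset.univ.filter (fun y => hammingDist x y = 1)
            = Finset.image (flip1 x) Finset.univ := by
          ext y
          simp only [Finset.mem_filter, Finset.mem_univ, true_and, Finset.mem_image]
          constructor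
          · intro hd
            obtain ⟨i, rfl⟩ := eq_flip1_of_hammingDist_eq_one hd
            exact ⟨i, rfl⟩
          · rintro ⟨i, rfl⟩
            exact hammingDist_flip1 x i
        rw [himg, Finset.sum_image (fun i _ j _ hij => flip1_injective x hij)]
    _ = (n : ℝ≥0∞)⁻¹ *
        ∑ i : Fin n, h (moeasUpdate f Bs s incr lo hi {x} (flip1 x i)) := by
        rw [Finset.mul_sum]

private lemma update_stay {n : ℕ} (f : (Fin n → Bool) → ℝ) {Bs s : ℕ} {incr : Bool}
    {lo hi : ℕ} {x y : Fin n → Bool}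
    (hni : ¬ incompS Bs s y x) (hnd : ¬ domS f Bs s incr y x) :
    moeasUpdate f Bs s incr lo hi {x} y = {x} := by
  rw [moeasUpdate, if_neg, if_neg]
  · rintro ⟨-, z, hz, hd⟩
    rw [Finset.mem_singleton] at hz; subst hz; exact hnd hd
  · intro hall
    exact hni (hall x (Finset.mem_singleton_self x))

private lemma update_replace {n : ℕ} (f : (Fin n → Bool) → ℝ) {Bs s : ℕ} {incr : Bool}
    {lo hi : ℕ} {x y : Fin n → Bool}
    (hni : ¬ incompS Bs s y x) (hd : domS f Bs s incr y x)
    (hlo : lo ≤ ones y) (hhi : ones y ≤ hi) :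
    moeasUpdate f Bs s incr lo hi {x} y = {y} := by
  rw [moeasUpdate, if_neg, if_pos]
  · rw [Finset.filter_singleton, if_neg (not_not_intro hd)]
    simp
  · exact ⟨⟨hlo, hhi⟩, x, Finset.mem_singleton_self x, hd⟩
  · intro hall
    exact hni (hall x (Finset.mem_singleton_self x))

private lemma update_insert' {n : ℕ} (f : (Fin n → Bool) → ℝ) {Bs s : ℕ} {incr : Bool}
    {lo hi : ℕ} {x y : Fin n → Bool} (h : incompS Bs s y x) :
    moeasUpdate f Bs s incr lo hi {x} y = insert y {x} := by
  rw [moeasUpdate, if_pos]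
  intro z hz; rw [Finset.mem_singleton] at hz; subst hz; exact h

private lemma not_incompS_of {n : ℕ} {Bs s : ℕ} {y x : Fin n → Bool}
    (h1 : ¬(ones y = Bs ∧ ones x = s)) (h2 : ¬(ones y = s ∧ ones x = Bs)) :
    ¬ incompS Bs s y x := by
  simp only [incompS]; tauto

private lemma incompS_of {n : ℕ} {Bs s : ℕ} {y x : Fin n → Bool}
    (h1 : ones y = Bs) (h2 : ones x = s) : incompS Bs s y x :=
  Or.inl ⟨h1, h2⟩

private lemma not_domS_lt {n : ℕ} (f : (Fin n → Bool) → ℝ) {Bs s : ℕ} {y x : Fin n → Bool}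
    (h : ones y < ones x) : ¬ domS f Bs s true y x := by
  simp only [domS]
  rintro (⟨-, h2 | ⟨h3, -⟩⟩ | ⟨-, -, h3, -⟩)
  · rw [if_pos trivial] at h2; omega
  · omega
  · omega

private lemma not_domS_gt {n : ℕ} (f : (Fin n → Bool) → ℝ) {Bs s : ℕ} {y x : Fin n → Bool}
    (h : ones x < ones y) : ¬ domS f Bs s false y x := by
  simp only [domS]
  rintro (⟨-, h2 | ⟨h3, -⟩⟩ | ⟨-, -, h3, -⟩)
  · rw [if_neg (by simp)] at h2; omega
  · omega
  · omega

private lemma domS_incr_of {n : ℕ} (f : (Fin n → Bool) → ℝ) {Bs s : ℕ} {y x : Fin n → Bool}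
    (hx1 : ones x ≠ Bs) (hx2 : ones x ≠ s) (hlt : ones x < ones y) :
    domS f Bs s true y x := by
  refine Or.inl ⟨?_, Or.inl ?_⟩
  · rintro ⟨-, hx⟩
    simp only [inBracket] at hx
    tauto
  · simpa using hlt

private lemma domS_decr_of {n : ℕ} (f : (Fin n → Bool) → ℝ) {Bs s : ℕ} {y x : Fin n → Bool}
    (hx1 : ones x ≠ Bs) (hx2 : ones x ≠ s) (hlt : ones y < ones x) :
    domS f Bs s false y x := by
  refine Or.inl ⟨?_, Or.inl ?_⟩
  · rintro ⟨-, hx⟩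
    simp only [inBracket] at hx
    tauto
  · simpa using hlt

private lemma drift_arith {N a b G : ℝ≥0∞} (hab : a + b = N) (hb0 : b ≠ 0) (hbt : b ≠ ∞)
    (hN0 : N ≠ 0) (hNt : N ≠ ∞) :
    1 + N⁻¹ * (a * (N * b⁻¹ + G) + b * G) ≤ N * b⁻¹ + G := by
  have hN1 : N⁻¹ * N = 1 := ENNReal.inv_mul_cancel hN0 hNt
  have hb1 : b * b⁻¹ = 1 := ENNReal.mul_inv_cancel hb0 hbt
  have key : 1 + N⁻¹ * (a * (N * b⁻¹ + G) + b * G) = N * b⁻¹ + G := by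
    have e1 : a * (N * b⁻¹ + G) + b * G = a * b⁻¹ * N + N * G := by
      rw [← hab]; ring
    rw [e1, mul_add, show N⁻¹ * (a * b⁻¹ * N) = a * b⁻¹ * (N⁻¹ * N) by ring,
      show N⁻¹ * (N * G) = N⁻¹ * N * G by ring, hN1, mul_one, one_mul,
      ← hab, add_mul, hb1]
    ring
  exact key.le

private lemma harmonic_le_log {m M : ℕ} (hm : 1 ≤ m) (hmM : m ≤ M) :
    ∑ i ∈ Finset.Ico m M, (1 : ℝ) / (i + 1) ≤ Real.log M - Real.log m := by
  have step : ∀ i ∈ Finset.Ico m M, (1 : ℝ) / (i + 1)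
      ≤ Real.log (i + 1) - Real.log i := by
    intro i hi
    have hi1 : 1 ≤ i := le_trans hm (Finset.mem_Ico.mp hi).1
    have hipos : (0 : ℝ) < i := by exact_mod_cast hi1
    have hi1pos : (0 : ℝ) < (i : ℝ) + 1 := by linarith
    have hlog : Real.log ((i : ℝ) / ((i : ℝ) + 1)) ≤ (i : ℝ) / ((i : ℝ) + 1) - 1 :=
      Real.log_le_sub_one_of_pos (by positivity)
    have hdiv : Real.log ((i : ℝ) / ((i : ℝ) + 1))
        = Real.log i - Real.log ((i : ℝ) + 1) :=
      Real.log_div (ne_of_gt hipos) (ne_of_gt hi1pos)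
    have harith : (i : ℝ) / ((i : ℝ) + 1) - 1 = -(1 / ((i : ℝ) + 1)) := by
      field_simp
      ring
    rw [hdiv, harith] at hlog
    linarith
  calc ∑ i ∈ Finset.Ico m M, (1 : ℝ) / (i + 1)
      ≤ ∑ i ∈ Finset.Ico m M, (Real.log (i + 1) - Real.log i) :=
        Finset.sum_le_sum step
    _ = Real.log M - Real.log m := by
        have h1 : ∀ i : ℕ, Real.log ((i : ℝ) + 1) = (fun k : ℕ => Real.log k) (i + 1) := by
          intro i; simp
        simp_rw [h1]
        rw [Finset.sum_Ico_eq_sub _ hmM]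
        rw [Finset.sum_range_sub (fun k : ℕ => Real.log k), Finset.sum_range_sub
          (fun k : ℕ => Real.log k)]
        simp

private lemma ofReal_nat_mul_inv {n m : ℕ} (hm : 1 ≤ m) :
    (n : ℝ≥0∞) * ((m : ℝ≥0∞))⁻¹ = ENNReal.ofReal ((n : ℝ) * ((m : ℝ))⁻¹) := by
  have hmpos : (0 : ℝ) < m := by exact_mod_cast hm
  rw [ENNReal.ofReal_mul (by positivity), ENNReal.ofReal_inv_of_pos hmpos,
    ENNReal.ofReal_natCast, ENNReal.ofReal_natCast]

private lemma incr_sum_le {n B Bs : ℕ} (hBn : B ≤ n) (hBsn : Bs < n) (hB : B < Bs) :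
    ∑ k ∈ Finset.Ico B Bs, (n : ℝ≥0∞) * (((n - k : ℕ) : ℝ≥0∞))⁻¹ ≤
      ENNReal.ofReal (1 * n * Real.log (((n : ℝ) - B) / ((n : ℝ) - Bs))) := by
  have hterm : ∀ k ∈ Finset.Ico B Bs, (n : ℝ≥0∞) * (((n - k : ℕ) : ℝ≥0∞))⁻¹
      = ENNReal.ofReal ((n : ℝ) * (((n - k : ℕ) : ℝ))⁻¹) := by
    intro k hk
    rw [Finset.mem_Ico] at hk
    exact ofReal_nat_mul_inv (by omega)
  rw [Finset.sum_congr rfl hterm, ← ENNReal.ofReal_sum_of_nonneg (fun k _ => by positivity)]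
  apply ENNReal.ofReal_le_ofReal
  rw [← Finset.mul_sum]
  have hre : ∑ k ∈ Finset.Ico B Bs, (((n - k : ℕ) : ℝ))⁻¹
      = ∑ i ∈ Finset.Ico (n - Bs) (n - B), (1 : ℝ) / (i + 1) := by
    refine Finset.sum_nbij' (fun k => n - 1 - k) (fun i => n - 1 - i) ?_ ?_ ?_ ?_ ?_
    · intro k hk; rw [Finset.mem_Ico] at *; omega
    · intro i hi; rw [Finset.mem_Ico] at *; omega
    · intro k hk; rw [Finset.mem_Ico] at hk; omega
    · intro i hi; rw [Finset.mem_Ico] at hi; omega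
    · intro k hk
      rw [Finset.mem_Ico] at hk
      have hcast : ((n - 1 - k : ℕ) : ℝ) + 1 = ((n - k : ℕ) : ℝ) := by
        rw [← Nat.cast_add_one]
        congr 1
        omega
      rw [one_div, hcast]
  rw [hre]
  have hlog := harmonic_le_log (m := n - Bs) (M := n - B) (by omega) (by omega)
  have hden : (0 : ℝ) < ((n - Bs : ℕ) : ℝ) := by
    have : (1 : ℕ) ≤ n - Bs := by omega
    exact_mod_cast lt_of_lt_of_le zero_lt_one (by exact_mod_cast this)
  have hnum : (0 : ℝ) < ((n - B : ℕ) : ℝ) := by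
    have : (1 : ℕ) ≤ n - B := by omega
    exact_mod_cast lt_of_lt_of_le zero_lt_one (by exact_mod_cast this)
  have hlogdiv : Real.log ((n - B : ℕ) : ℝ) - Real.log ((n - Bs : ℕ) : ℝ)
      = Real.log (((n : ℝ) - B) / ((n : ℝ) - Bs)) := by
    rw [← Real.log_div (ne_of_gt hnum) (ne_of_gt hden)]
    rw [Nat.cast_sub hBn, Nat.cast_sub (le_of_lt hBsn)]
  calc (n : ℝ) * ∑ i ∈ Finset.Ico (n - Bs) (n - B), (1 : ℝ) / (i + 1)
      ≤ (n : ℝ) * (Real.log ((n - B : ℕ) : ℝ) - Real.log ((n - Bs : ℕ) : ℝ)) := by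
        apply mul_le_mul_of_nonneg_left hlog (by positivity)
    _ = 1 * n * Real.log (((n : ℝ) - B) / ((n : ℝ) - Bs)) := by
        rw [hlogdiv]; ring

private lemma decr_sum_le {n B Bs : ℕ} (hBn : B ≤ n) (hBs1 : 1 ≤ Bs) (hB : Bs < B) :
    ∑ k ∈ Finset.Ioc Bs B, (n : ℝ≥0∞) * ((k : ℝ≥0∞))⁻¹ ≤
      ENNReal.ofReal (1 * n * Real.log ((B : ℝ) / (Bs : ℝ))) := by
  have hterm : ∀ k ∈ Finset.Ioc Bs B, (n : ℝ≥0∞) * ((k : ℝ≥0∞))⁻¹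
      = ENNReal.ofReal ((n : ℝ) * ((k : ℝ))⁻¹) := by
    intro k hk
    rw [Finset.mem_Ioc] at hk
    exact ofReal_nat_mul_inv (by omega)
  rw [Finset.sum_congr rfl hterm, ← ENNReal.ofReal_sum_of_nonneg (fun k _ => by positivity)]
  apply ENNReal.ofReal_le_ofReal
  rw [← Finset.mul_sum]
  have hre : ∑ k ∈ Finset.Ioc Bs B, ((k : ℝ))⁻¹
      = ∑ i ∈ Finset.Ico Bs B, (1 : ℝ) / (i + 1) := by
    refine Finset.sum_nbij' (fun k => k - 1) (fun i => i + 1) ?_ ?_ ?_ ?_ ?_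
    · intro k hk; rw [Finset.mem_Ioc] at hk; rw [Finset.mem_Ico]; omega
    · intro i hi; rw [Finset.mem_Ico] at hi; rw [Finset.mem_Ioc]; omega
    · intro k hk; rw [Finset.mem_Ioc] at hk; omega
    · intro i hi; omega
    · intro k hk
      rw [Finset.mem_Ioc] at hk
      have hcast : ((k - 1 : ℕ) : ℝ) + 1 = (k : ℝ) := by
        rw [← Nat.cast_add_one]
        congr 1
        omega
      rw [one_div, hcast]
  rw [hre]
  have hlog := harmonic_le_log (m := Bs) (M := B) hBs1 (le_of_lt hB)
  have hden : (0 : ℝ) < (Bs : ℝ) := by exact_mod_cast hBs1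
  have hnum : (0 : ℝ) < (B : ℝ) := by
    have : 1 ≤ B := by omega
    exact_mod_cast this
  calc (n : ℝ) * ∑ i ∈ Finset.Ico Bs B, (1 : ℝ) / (i + 1)
      ≤ (n : ℝ) * (Real.log B - Real.log Bs) := by
        apply mul_le_mul_of_nonneg_left hlog (by positivity)
    _ = 1 * n * Real.log ((B : ℝ) / (Bs : ℝ)) := by
        rw [Real.log_div (ne_of_gt hnum) (ne_of_gt hden)]; ring

private lemma incr_case {n B Bs : ℕ} (hBn : B ≤ n) (hBsn : Bs < n) (hB : B < Bs)
    (x₀ : Fin n → Bool) (hx₀ : ones x₀ = B) :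
    hitTime (moeasKernel n (fun x => (ones x : ℝ)) Bs (Bs - 1) true B Bs)
        (fun P => ∃ x ∈ P, ones x = Bs) {x₀} ≤
      ∑ k ∈ Finset.Ico B Bs, (n : ℝ≥0∞) * (((n - k : ℕ) : ℝ≥0∞))⁻¹ := by
  have hs : (Bs - 1) + 1 = Bs := by omega
  set f : (Fin n → Bool) → ℝ := fun x => (ones x : ℝ) with hf
  set g : ℕ → ℝ≥0∞ :=
    fun w => ∑ k ∈ Finset.Ico w Bs, (n : ℝ≥0∞) * (((n - k : ℕ) : ℝ≥0∞))⁻¹ with hg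
  set h : Finset (Fin n → Bool) → ℝ≥0∞ := fun P =>
    if ∃ x ∈ P, ones x = Bs then 0
    else if ∃ x, P = {x} ∧ B ≤ ones x ∧ ones x < Bs then g (∑ z ∈ P, ones z) else ∞ with hh
  have hsingle : ∀ x : Fin n → Bool, B ≤ ones x → ones x < Bs → h {x} = g (ones x) := by
    intro x h1 h2
    have hA' : ¬ ∃ z ∈ ({x} : Finset (Fin n → Bool)), ones z = Bs := by
      rintro ⟨z, hz, hzz⟩
      rw [Finset.mem_singleton] at hz
      subst hz; omega
    rw [hh]
    simp only
    rw [if_neg hA', if_pos ⟨x, rfl, h1, h2⟩, Finset.sum_singleton]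
  have main : ∀ P, ¬ (∃ x ∈ P, ones x = Bs) →
      1 + ∑' Q, moeasKernel n f Bs (Bs - 1) true B Bs P Q * h Q ≤ h P := by
    intro P hP
    by_cases hgood : ∃ x, P = {x} ∧ B ≤ ones x ∧ ones x < Bs
    case neg =>
      have : h P = ∞ := by rw [hh]; simp only; rw [if_neg hP, if_neg hgood]
      rw [this]; exact le_top
    obtain ⟨x, rfl, hx1, hx2⟩ := hgood
    rw [kernel_sum]
    have hxn : ones x < n := lt_of_lt_of_le hx2 (le_of_lt hBsn)
    -- the values of h after one step
    have hstep : ∀ i : Fin n, h (moeasUpdate f Bs (Bs - 1) true B Bs {x} (flip1 x i))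
        = if x i = true then g (ones x) else g (ones x + 1) := by
      intro i
      by_cases hxi : x i = true
      · rw [if_pos hxi]
        have hlt : ones (flip1 x i) < ones x := by
          have := ones_flip1_true x i hxi; omega
        rw [update_stay f (not_incompS_of (by omega) (by omega)) (not_domS_lt f hlt)]
        exact hsingle x hx1 hx2
      · rw [if_neg hxi]
        have hxi' : x i = false := by
          cases hxi2 : x i
          · rfl
          · exact absurd hxi2 hxi
        have hones : ones (flip1 x i) = ones x + 1 := ones_flip1_false x i hxi'
        by_cases hlast : ones x + 1 = Bs
        · rw [update_insert' f (incompS_of (by omega) (by omega))]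
          have hAy : ∃ z ∈ insert (flip1 x i) ({x} : Finset (Fin n → Bool)), ones z = Bs :=
            ⟨flip1 x i, Finset.mem_insert_self _ _, by omega⟩
          rw [hh]; simp only
          rw [if_pos hAy, hlast, hg]; simp only
          rw [Finset.Ico_self, Finset.sum_empty]
        · have hlt2 : ones x + 1 < Bs := by omega
          rw [update_replace f (not_incompS_of (by omega) (by omega))
            (domS_incr_of f (by omega) (by omega) (by omega))
            (by omega) (by omega)]
          rw [hsingle (flip1 x i) (by omega) (by omega), hones]
    -- sum the values
    have hsum : ∑ i : Fin n, h (moeasUpdate f Bs (Bs - 1) true B Bs {x} (flip1 x i))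
        = (ones x : ℝ≥0∞) * g (ones x) + ((n - ones x : ℕ) : ℝ≥0∞) * g (ones x + 1) := by
      simp_rw [hstep]
      rw [Finset.sum_ite, Finset.sum_const, Finset.sum_const]
      have hc1 : (Finset.univ.filter fun i => x i = true).card = ones x := rfl
      have hc2 : (Finset.univ.filter fun i => ¬(x i = true)).card = n - ones x := by
        have := card_false_add_ones x; omega
      rw [hc1, hc2, nsmul_eq_mul, nsmul_eq_mul]
    rw [hsum]
    have hrec : g (ones x) = (n : ℝ≥0∞) * (((n - ones x : ℕ) : ℝ≥0∞))⁻¹ + g (ones x + 1) := by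
      rw [hg]; simp only
      rw [Finset.sum_eq_sum_Ico_succ_bot hx2]
    rw [hsingle x hx1 hx2, hrec]
    exact drift_arith
      (by rw [← Nat.cast_add]; congr 1; omega)
      (by rw [Nat.cast_ne_zero]; omega)
      (ENNReal.natCast_ne_top _)
      (by rw [Nat.cast_ne_zero]; omega)
      (ENNReal.natCast_ne_top _)
  calc hitTime (moeasKernel n f Bs (Bs - 1) true B Bs)
        (fun P => ∃ x ∈ P, ones x = Bs) {x₀}
      ≤ h {x₀} := hitTime_le_of _ _ h main {x₀}
    _ = g B := by rw [hsingle x₀ (by omega) (by omega), hx₀]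
    _ = _ := by rw [hg]

private lemma decr_case {n B Bs : ℕ} (hBn : B ≤ n) (hBs1 : 1 ≤ Bs) (hB : Bs < B)
    (x₀ : Fin n → Bool) (hx₀ : ones x₀ = B) :
    hitTime (moeasKernel n (fun x => (ones x : ℝ)) Bs (Bs + 1) false Bs B)
        (fun P => ∃ x ∈ P, ones x = Bs) {x₀} ≤
      ∑ k ∈ Finset.Ioc Bs B, (n : ℝ≥0∞) * ((k : ℝ≥0∞))⁻¹ := by
  have hn0 : 0 < n := lt_of_lt_of_le (lt_of_le_of_lt (Nat.zero_le Bs) hB) hBn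
  set f : (Fin n → Bool) → ℝ := fun x => (ones x : ℝ) with hf
  set g : ℕ → ℝ≥0∞ :=
    fun w => ∑ k ∈ Finset.Ioc Bs w, (n : ℝ≥0∞) * ((k : ℝ≥0∞))⁻¹ with hg
  set h : Finset (Fin n → Bool) → ℝ≥0∞ := fun P =>
    if ∃ x ∈ P, ones x = Bs then 0
    else if ∃ x, P = {x} ∧ Bs < ones x ∧ ones x ≤ B then g (∑ z ∈ P, ones z) else ∞ with hh
  have hsingle : ∀ x : Fin n → Bool, Bs < ones x → ones x ≤ B → h {x} = g (ones x) := by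
    intro x h1 h2
    have hA' : ¬ ∃ z ∈ ({x} : Finset (Fin n → Bool)), ones z = Bs := by
      rintro ⟨z, hz, hzz⟩
      rw [Finset.mem_singleton] at hz
      subst hz; omega
    rw [hh]
    simp only
    rw [if_neg hA', if_pos ⟨x, rfl, h1, h2⟩, Finset.sum_singleton]
  have main : ∀ P, ¬ (∃ x ∈ P, ones x = Bs) →
      1 + ∑' Q, moeasKernel n f Bs (Bs + 1) false Bs B P Q * h Q ≤ h P := by
    intro P hP
    by_cases hgood : ∃ x, P = {x} ∧ Bs < ones x ∧ ones x ≤ B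
    case neg =>
      have : h P = ∞ := by rw [hh]; simp only; rw [if_neg hP, if_neg hgood]
      rw [this]; exact le_top
    obtain ⟨x, rfl, hx1, hx2⟩ := hgood
    rw [kernel_sum]
    have hxn : ones x ≤ n := le_trans hx2 hBn
    have hstep : ∀ i : Fin n, h (moeasUpdate f Bs (Bs + 1) false Bs B {x} (flip1 x i))
        = if x i = true then g (ones x - 1) else g (ones x) := by
      intro i
      by_cases hxi : x i = true
      · rw [if_pos hxi]
        have hones : ones x = ones (flip1 x i) + 1 := ones_flip1_true x i hxi
        by_cases hlast : ones x = Bs + 1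
        · rw [update_insert' f (incompS_of (by omega) (by omega))]
          have hAy : ∃ z ∈ insert (flip1 x i) ({x} : Finset (Fin n → Bool)), ones z = Bs :=
            ⟨flip1 x i, Finset.mem_insert_self _ _, by omega⟩
          rw [hh]; simp only
          rw [if_pos hAy]
          have : ones x - 1 = Bs := by omega
          rw [this, hg]; simp only
          rw [Finset.Ioc_self, Finset.sum_empty]
        · rw [update_replace f (not_incompS_of (by omega) (by omega))
            (domS_decr_of f (by omega) (by omega) (by omega))
            (by omega) (by omega)]
          rw [hsingle (flip1 x i) (by omega) (by omega)]
          congr 1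
          omega
      · rw [if_neg hxi]
        have hxi' : x i = false := by
          cases hxi2 : x i
          · rfl
          · exact absurd hxi2 hxi
        have hones : ones (flip1 x i) = ones x + 1 := ones_flip1_false x i hxi'
        have hgt : ones x < ones (flip1 x i) := by omega
        rw [update_stay f (not_incompS_of (by omega) (by omega)) (not_domS_gt f hgt)]
        exact hsingle x hx1 hx2
    have hsum : ∑ i : Fin n, h (moeasUpdate f Bs (Bs + 1) false Bs B {x} (flip1 x i))
        = (ones x : ℝ≥0∞) * g (ones x - 1) + ((n - ones x : ℕ) : ℝ≥0∞) * g (ones x) := by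
      simp_rw [hstep]
      rw [Finset.sum_ite, Finset.sum_const, Finset.sum_const]
      have hc1 : (Finset.univ.filter fun i => x i = true).card = ones x := rfl
      have hc2 : (Finset.univ.filter fun i => ¬(x i = true)).card = n - ones x := by
        have := card_false_add_ones x; omega
      rw [hc1, hc2, nsmul_eq_mul, nsmul_eq_mul]
    rw [hsum]
    have hrec : g (ones x) = (n : ℝ≥0∞) * ((ones x : ℝ≥0∞))⁻¹ + g (ones x - 1) := by
      rw [hg]; simp only
      have hw : ones x = (ones x - 1) + 1 := by omega
      rw [hw, Finset.sum_Ioc_succ_top (by omega), ← hw, add_comm]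
    rw [hsingle x hx1 hx2, hrec]
    have hre : (ones x : ℝ≥0∞) * g (ones x - 1)
          + ((n - ones x : ℕ) : ℝ≥0∞) *
            ((n : ℝ≥0∞) * ((ones x : ℝ≥0∞))⁻¹ + g (ones x - 1))
        = ((n - ones x : ℕ) : ℝ≥0∞) *
            ((n : ℝ≥0∞) * ((ones x : ℝ≥0∞))⁻¹ + g (ones x - 1))
          + (ones x : ℝ≥0∞) * g (ones x - 1) := by ring
    rw [hre]
    exact drift_arith
      (by rw [← Nat.cast_add]; congr 1; omega)
      (by rw [Nat.cast_ne_zero]; omega)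
      (ENNReal.natCast_ne_top _)
      (by rw [Nat.cast_ne_zero]; omega)
      (ENNReal.natCast_ne_top _)
  calc hitTime (moeasKernel n f Bs (Bs + 1) false Bs B)
        (fun P => ∃ x ∈ P, ones x = Bs) {x₀}
      ≤ h {x₀} := hitTime_le_of _ _ h main {x₀}
    _ = g B := by rw [hsingle x₀ (by omega) (by omega), hx₀]
    _ = _ := by rw [hg]

/-- For OneMax under a dynamic uniform constraint changing from `B` to `B*`,
the MOEA-S (single-bit flips, population of size at most two), started with the population
`{x₀}` where `x₀` is optimal for bound `B`, finds a solution with exactly `B*` ones in expected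
time `O(n log((n−B)/(n−B*)))` if `B < B*` and `O(n log(B/B*))` if `B > B*`. -/
theorem stmt_3 :
    ∃ c : ℝ, 0 < c ∧ ∃ n₀ : ℕ, ∀ n : ℕ, n₀ ≤ n → ∀ B Bs : ℕ, B ≤ n → Bs ≤ n →
      ∀ x₀ : Fin n → Bool, ones x₀ = B →
        ((B < Bs → Bs < n →
          hitTime (moeasKernel n (fun x => (ones x : ℝ)) Bs (Bs - 1) true B Bs)
              (fun P => ∃ x ∈ P, ones x = Bs) {x₀} ≤
            ENNReal.ofReal (c * n * Real.log (((n : ℝ) - B) / ((n : ℝ) - Bs)))) ∧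
         (Bs < B → 1 ≤ Bs →
          hitTime (moeasKernel n (fun x => (ones x : ℝ)) Bs (Bs + 1) false Bs B)
              (fun P => ∃ x ∈ P, ones x = Bs) {x₀} ≤
            ENNReal.ofReal (c * n * Real.log ((B : ℝ) / (Bs : ℝ))))) := by
  refine ⟨1, one_pos, 0, fun n _ B Bs hBn hBsn x₀ hx₀ => ⟨fun hB hBsn' => ?_, fun hB hBs1 => ?_⟩⟩
  · exact le_trans (incr_case hBn hBsn' hB x₀ hx₀) (incr_sum_le hBn hBsn' hB)
  · exact le_trans (decr_case hBn hBs1 hB x₀ hx₀) (decr_sum_le hBn hBs1 hB)
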